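/- Identify ℝ² with ℂ and let Y = {y_k : k ≥ 2} where y_k = r_k e^{iφ_k}, r_k = k log k, φ_k = (log log k)^{1/2}. Then for every x ∈ ℝ² and every v ∈ S¹, dist(L_{x,v}, Y) = 0; that is, every ray in the plane comes arbitrarily close to the spiral set Y. -/

import Mathlib

open Metric Set Filter Real

set_option maxHeartbeats 2000000

noncomputable def setDist {E : Type*} [PseudoMetricSpace E] (A B : Set E) : ℝ :=
  sInf (Set.image2 dist A B)

noncomputable def spiralPoint (k : ℕ) : ℂ :=
  (((k : ℝ) * Real.log k : ℝ) : ℂ) *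
    Complex.exp (Complex.I * (Real.sqrt (Real.log (Real.log k)) : ℝ))

namespace SpiralAux

noncomputable def rr (k : ℕ) : ℝ := (k : ℝ) * Real.log k
noncomputable def ph (k : ℕ) : ℝ := Real.sqrt (Real.log (Real.log k))

lemma abs_sin_sub (a b : ℝ) : |Real.sin a - Real.sin b| ≤ |a - b| := by
  rw [Real.sin_sub_sin]
  calc |2 * Real.sin ((a-b)/2) * Real.cos ((a+b)/2)|
      = 2 * |Real.sin ((a-b)/2)| * |Real.cos ((a+b)/2)| := by
        rw [abs_mul, abs_mul]; norm_num
    _ ≤ 2 * |(a-b)/2| * 1 := by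
        apply mul_le_mul (mul_le_mul_of_nonneg_left Real.abs_sin_le_abs (by norm_num))
          (Real.abs_cos_le_one _) (abs_nonneg _) (by positivity)
    _ = |a - b| := by rw [mul_one, abs_div]; simp [abs_of_nonneg]; ring


lemma sin_shift (y : ℝ) (n : ℕ) : Real.sin (y - 2*Real.pi*n) = Real.sin y := by
  have h := Real.sin_add_int_mul_two_pi (y - 2*Real.pi*n) (n:ℤ)
  rw [show y - 2*Real.pi*(n:ℝ) + ((n:ℤ):ℝ)*(2*Real.pi) = y by push_cast; ring] at h
  exact h.symm

lemma cos_shift (y : ℝ) (n : ℕ) : Real.cos (y - 2*Real.pi*n) = Real.cos y := by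
  have h := Real.cos_add_int_mul_two_pi (y - 2*Real.pi*n) (n:ℤ)
  rw [show y - 2*Real.pi*(n:ℝ) + ((n:ℤ):ℝ)*(2*Real.pi) = y by push_cast; ring] at h
  exact h.symm

lemma small_of_mul {r d : ℝ} (h1 : 1 ≤ r) (h0 : 0 ≤ d) (h : r * d ≤ 1/4) : d ≤ 1/4 := by
  nlinarith

lemma cos_lb {s : ℝ} (h1 : -(Real.pi/4) ≤ s) (h2 : s ≤ Real.pi/4) : 1/2 ≤ Real.cos s := by
  have hπ2 : Real.pi < 3.15 := Real.pi_lt_d2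
  have hπ1 : (3.14:ℝ) < Real.pi := Real.pi_gt_d2
  have hq := Real.one_sub_sq_div_two_le_cos (x := s)
  nlinarith

lemma b_step_bound {rj r1 sj s1 d cb X ε : ℝ} (hε : 0 < ε) (hX1 : 0 < X + 1) (hcb : cb ≤ X)
    (h1 : s1 ≤ sj + d) (hd0 : 0 ≤ d) (hdj : r1 * d ≤ ε/4) (hj : rj * sj ≤ cb - ε)
    (hmono : rj ≤ r1) (hgap : r1 - rj ≤ ε/(4*(X+1)) * rj) (hr1 : 0 ≤ r1) :
    r1 * s1 - cb ≤ ε := by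
  have hh1 : r1 * s1 ≤ r1 * (sj + d) := mul_le_mul_of_nonneg_left h1 hr1
  rcases le_or_gt sj 0 with hsj | hsj
  · have h2 : r1 * sj ≤ rj * sj := mul_le_mul_of_nonpos_right hmono hsj
    nlinarith
  · have h2 := mul_le_mul_of_nonneg_right hgap hsj.le
    have h3 : (ε/(4*(X+1))) * (rj * sj) ≤ (ε/(4*(X+1))) * X :=
      mul_le_mul_of_nonneg_left (by linarith) (by positivity)
    have h4 : (ε/(4*(X+1))) * X ≤ ε/4 := by
      rw [div_mul_eq_mul_div, div_le_div_iff₀ (by positivity) (by norm_num)]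
      nlinarith
    nlinarith

lemma log_nat_ge_one {k : ℕ} (hk : 3 ≤ k) : 1 ≤ Real.log k := by
  have h3 : (3:ℝ) ≤ (k:ℝ) := by exact_mod_cast hk
  have he : Real.exp 1 ≤ 3 := by have := Real.exp_one_lt_d9; linarith
  have := Real.log_le_log (Real.exp_pos 1) (he.trans h3)
  rwa [Real.log_exp] at this

lemma log_succ_sub_log {k : ℕ} (hk : 3 ≤ k) :
    Real.log ((k:ℝ)+1) - Real.log k ≤ 1 / k := by
  have h3 : (3:ℝ) ≤ (k:ℝ) := by exact_mod_cast hk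
  have hk0 : (0:ℝ) < k := by linarith
  have h1 : Real.log ((k:ℝ)+1) - Real.log k = Real.log (((k:ℝ)+1)/k) := by
    rw [Real.log_div (by linarith) (by linarith)]
  rw [h1]
  have h2 := Real.log_le_sub_one_of_pos (show (0:ℝ) < ((k:ℝ)+1)/k by positivity)
  have h3' : ((k:ℝ)+1)/k - 1 = 1/k := by field_simp; ring
  linarith

lemma sqrt_tendsto : Tendsto Real.sqrt atTop atTop := by
  refine tendsto_atTop_atTop.2 fun b => ⟨(max b 0)^2, fun a ha => ?_⟩
  have h0 : 0 ≤ max b 0 := le_max_right _ _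
  have h2 : max b 0 ≤ Real.sqrt a := by
    rw [Real.le_sqrt h0 (le_trans (by positivity) ha)]; exact ha
  exact le_trans (le_max_left _ _) h2

lemma ph_tendsto : Tendsto ph atTop atTop :=
  sqrt_tendsto.comp (Real.tendsto_log_atTop.comp
    (Real.tendsto_log_atTop.comp tendsto_natCast_atTop_atTop))

lemma ph_mono {i j : ℕ} (h3 : 3 ≤ i) (hij : i ≤ j) : ph i ≤ ph j := by
  have hci : (3:ℝ) ≤ (i:ℝ) := by exact_mod_cast h3
  have hcij : (i:ℝ) ≤ (j:ℝ) := by exact_mod_cast hij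
  have h1 : Real.log i ≤ Real.log j := Real.log_le_log (by linarith) hcij
  have h2 : Real.log (Real.log i) ≤ Real.log (Real.log j) :=
    Real.log_le_log (by linarith [log_nat_ge_one h3]) h1
  exact Real.sqrt_le_sqrt h2

lemma ph_step {k : ℕ} (hk : 3 ≤ k) (hu : 1 ≤ Real.log (Real.log k)) :
    0 ≤ ph (k+1) - ph k ∧
      rr (k+1) * (ph (k+1) - ph k) ≤ 2 / Real.sqrt (Real.log (Real.log k)) := by
  have hk3 : (3:ℝ) ≤ (k:ℝ) := by exact_mod_cast hk
  have hk0 : (0:ℝ) < k := by linarith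
  have hcast : ((k+1:ℕ):ℝ) = (k:ℝ)+1 := by push_cast; ring
  have ha1 : 1 ≤ Real.log k := log_nat_ge_one hk
  have haa' : Real.log k ≤ Real.log ((k:ℝ)+1) := Real.log_le_log (by linarith) (by linarith)
  have ha'2 : Real.log ((k:ℝ)+1) ≤ 2 * Real.log k := by
    have h1 : ((k:ℝ)+1) ≤ (k:ℝ)^2 := by nlinarith
    have h2 := Real.log_le_log (by linarith) h1
    rw [show (k:ℝ)^2 = (k:ℝ)*(k:ℝ) by ring, Real.log_mul (by linarith) (by linarith)] at h2
    linarith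
  have huu' : Real.log (Real.log k) ≤ Real.log (Real.log ((k:ℝ)+1)) :=
    Real.log_le_log (by linarith) haa'
  have hu'1 : 1 ≤ Real.log (Real.log ((k:ℝ)+1)) := le_trans hu huu'
  have hph' : ph (k+1) = Real.sqrt (Real.log (Real.log ((k:ℝ)+1))) := by
    unfold ph; rw [hcast]
  have hph : ph k = Real.sqrt (Real.log (Real.log (k:ℝ))) := rfl
  set u := Real.log (Real.log (k:ℝ)) with hud
  set u' := Real.log (Real.log ((k:ℝ)+1)) with hu'd
  set s := Real.sqrt u with hsd
  set s' := Real.sqrt u' with hs'd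
  have hs1 : 1 ≤ s := by
    rw [hsd, show (1:ℝ) = Real.sqrt 1 by rw [Real.sqrt_one]]
    exact Real.sqrt_le_sqrt hu
  have hss' : s ≤ s' := Real.sqrt_le_sqrt huu'
  have hsq : s^2 = u := Real.sq_sqrt (by linarith)
  have hsq' : s'^2 = u' := Real.sq_sqrt (by linarith)
  have key1 : (s' - s) * (2*s) ≤ u' - u := by nlinarith
  have hlog1k := log_succ_sub_log hk
  have huu2 : u' - u ≤ (Real.log ((k:ℝ)+1) - Real.log k) / Real.log k := by
    have h1 : u' - u = Real.log (Real.log ((k:ℝ)+1) / Real.log k) := by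
      rw [hu'd, hud, Real.log_div (by linarith) (by linarith)]
    rw [h1]
    have h2 := Real.log_le_sub_one_of_pos
      (div_pos (show (0:ℝ) < Real.log ((k:ℝ)+1) by linarith) (show (0:ℝ) < Real.log k by linarith))
    have h3 : Real.log ((k:ℝ)+1)/Real.log k - 1
        = (Real.log ((k:ℝ)+1) - Real.log k)/Real.log k := by field_simp
    linarith
  have hkL : (0:ℝ) < (k:ℝ) * Real.log k := by nlinarith
  have huu3 : u' - u ≤ 1 / ((k:ℝ) * Real.log k) := by
    calc u' - u ≤ (Real.log ((k:ℝ)+1) - Real.log k) / Real.log k := huu2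
      _ ≤ (1/(k:ℝ)) / Real.log k := by
          exact div_le_div₀ (by positivity) hlog1k (by linarith) le_rfl
      _ = 1 / ((k:ℝ)*Real.log k) := by rw [div_div]
  have hrr' : rr (k+1) ≤ 4 * ((k:ℝ) * Real.log k) := by
    unfold rr; rw [hcast]; nlinarith
  constructor
  · rw [hph', hph]; linarith
  · rw [hph', hph]
    have hs0 : (0:ℝ) < s := by linarith
    rw [le_div_iff₀ hs0]
    have h0 : 0 ≤ s' - s := by linarith
    have hrr0 : 0 ≤ rr (k+1) := by
      unfold rr; rw [hcast]; nlinarith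
    have e2 : (s'-s)*s ≤ (u'-u)/2 := by linarith [key1]
    have hd0 : 0 ≤ (s'-s)*s := mul_nonneg h0 hs0.le
    have hd : (s'-s)*s ≤ 1/((k:ℝ)*Real.log k)/2 := by linarith
    have hbig := mul_le_mul hrr' hd hd0 (by linarith [hkL] : (0:ℝ) ≤ 4*((k:ℝ)*Real.log k))
    have hinv : (4*((k:ℝ)*Real.log k)) * (1/((k:ℝ)*Real.log k)/2) = 2 := by
      field_simp; ring
    linarith [hbig, hinv]

lemma rr_gap {k : ℕ} (hk : 3 ≤ k) :
    rr k ≤ rr (k+1) ∧ rr (k+1) - rr k ≤ (3/(k:ℝ)) * rr k := by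
  have hk3 : (3:ℝ) ≤ (k:ℝ) := by exact_mod_cast hk
  have hk0 : (0:ℝ) < k := by linarith
  have hcast : ((k+1:ℕ):ℝ) = (k:ℝ)+1 := by push_cast; ring
  have ha1 : 1 ≤ Real.log k := log_nat_ge_one hk
  have haa' : Real.log k ≤ Real.log ((k:ℝ)+1) := Real.log_le_log (by linarith) (by linarith)
  have hgap := log_succ_sub_log hk
  have h1k : (0:ℝ) < 1/(k:ℝ) := by positivity
  constructor
  · unfold rr; rw [hcast]; nlinarith
  · unfold rr; rw [hcast]
    have hstep : (k:ℝ) * (Real.log ((k:ℝ)+1) - Real.log k) ≤ 1 := by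
      have := mul_le_mul_of_nonneg_left hgap (le_of_lt hk0)
      calc (k:ℝ) * (Real.log ((k:ℝ)+1) - Real.log k) ≤ (k:ℝ) * (1/k) := this
        _ = 1 := by field_simp
    have ha'b : Real.log ((k:ℝ)+1) ≤ Real.log k + 1 := by
      have : 1/(k:ℝ) ≤ 1 := by rw [div_le_one hk0]; linarith
      linarith [hgap]
    rw [show (3/(k:ℝ))*((k:ℝ)*Real.log k) = 3*Real.log k from by field_simp]
    nlinarith

lemma dist_formula (x v : ℂ) (hv : ‖v‖ = 1) (k : ℕ) :
    dist (x + (rr k * Real.cos (ph k - v.arg) - (x * (starRingEnd ℂ) v).re) • v)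
        (spiralPoint k)
      = |rr k * Real.sin (ph k - v.arg) - (x * (starRingEnd ℂ) v).im| := by
  have habs : ‖v‖ = 1 := hv
  have hvexp : Complex.exp ((v.arg : ℂ) * Complex.I) = v := by
    have h := Complex.norm_mul_exp_arg_mul_I v
    rwa [habs, Complex.ofReal_one, one_mul] at h
  have hconj : (starRingEnd ℂ) v * v = 1 := by
    rw [mul_comm, Complex.mul_conj]
    rw [Complex.normSq_eq_norm_sq, habs]; norm_num
  have hx : x = (x * (starRingEnd ℂ) v) * v := by rw [mul_assoc, hconj, mul_one]
  set ψ := ph k - v.arg with hψ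
  have hspiral : spiralPoint k
      = (((rr k * Real.cos ψ : ℝ) : ℂ) + ((rr k * Real.sin ψ : ℝ) : ℂ) * Complex.I) * v := by
    show (((rr k : ℝ)) : ℂ) * Complex.exp (Complex.I * ((ph k : ℝ) : ℂ)) = _
    have harg : Complex.I * ((ph k : ℝ) : ℂ)
        = ((ψ : ℝ) : ℂ) * Complex.I + ((v.arg : ℝ) : ℂ) * Complex.I := by
      rw [hψ]; push_cast; ring
    rw [harg, Complex.exp_add, Complex.exp_mul_I, hvexp]
    rw [← Complex.ofReal_cos, ← Complex.ofReal_sin]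
    push_cast; ring
  set c := x * (starRingEnd ℂ) v with hcdef
  set ca := c.re with hcad
  set cb := c.im with hcbd
  have hc : c = ((ca : ℝ) : ℂ) + ((cb : ℝ) : ℂ) * Complex.I := by
    rw [hcad, hcbd]; exact (Complex.re_add_im c).symm
  rw [dist_eq_norm]
  have key : x + ((rr k * Real.cos ψ - ca : ℝ)) • v - spiralPoint k
      = ((cb - rr k * Real.sin ψ : ℝ) : ℂ) * Complex.I * v := by
    rw [hspiral]
    nth_rewrite 1 [hx]
    rw [Complex.real_smul, hc]
    push_cast; ring
  rw [key, norm_mul, norm_mul, hv, Complex.norm_I]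
  rw [Complex.norm_real, Real.norm_eq_abs, abs_sub_comm]
  ring

lemma approx (x v : ℂ) (hv : ‖v‖ = 1) {ε : ℝ} (hε : 0 < ε) (hε1 : ε ≤ 1) :
    ∃ (k : ℕ) (t : ℝ), 2 ≤ k ∧ 0 ≤ t ∧
      dist (x + t • v) (spiralPoint k) ≤ ε := by
  set θ := v.arg with hθ
  set c := x * (starRingEnd ℂ) v with hcdef
  set ca := c.re with hcad
  set cb := c.im with hcbd
  set X := ‖x‖ with hXd
  have hX0 : 0 ≤ X := by rw [hXd]; exact norm_nonneg x
  have hcabs : ‖c‖ = X := by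
    rw [hcdef, norm_mul, Complex.norm_conj,
      show ‖v‖ = 1 from hv, mul_one, hXd]
  have hca : |ca| ≤ X := by rw [hcad, ← hcabs]; exact Complex.abs_re_le_norm c
  have hcb : |cb| ≤ X := by rw [hcbd, ← hcabs]; exact Complex.abs_im_le_norm c
  have habs_cb := abs_le.1 hcb
  have habs_ca := abs_le.1 hca
  have hπ1 : (3.14:ℝ) < Real.pi := Real.pi_gt_d2
  have hπ2 : Real.pi < 3.15 := Real.pi_lt_d2
  have hllog : Tendsto (fun k : ℕ => Real.log (Real.log k)) atTop atTop :=
    Real.tendsto_log_atTop.comp (Real.tendsto_log_atTop.comp tendsto_natCast_atTop_atTop)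
  -- eventual conditions
  have e1 : ∀ᶠ k : ℕ in atTop, 3 ≤ k := eventually_ge_atTop 3
  have e2 : ∀ᶠ k : ℕ in atTop, 8*(X+1)/ε ≤ rr k := by
    have h1 := (tendsto_natCast_atTop_atTop (R := ℝ)).eventually_ge_atTop (8*(X+1)/ε)
    filter_upwards [h1, e1] with k hk h3
    have hL := log_nat_ge_one h3
    have hk0 : (0:ℝ) ≤ (k:ℝ) := Nat.cast_nonneg k
    have hm := mul_le_mul_of_nonneg_left hL hk0
    unfold rr; linarith [hm]
  have e3 : ∀ᶠ k : ℕ in atTop, max 1 ((8/ε)^2) ≤ Real.log (Real.log k) :=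
    hllog.eventually_ge_atTop _
  have e4 : ∀ᶠ k : ℕ in atTop, (3:ℝ)/k ≤ ε/(4*(X+1)) := by
    have h1 := (tendsto_natCast_atTop_atTop (R := ℝ)).eventually_ge_atTop (12*(X+1)/ε)
    filter_upwards [h1, e1] with k hk h3
    have hk0 : (0:ℝ) < k := by
      have : (3:ℝ) ≤ (k:ℝ) := by exact_mod_cast h3
      linarith
    rw [div_le_iff₀ hε] at hk
    rw [div_le_div_iff₀ hk0 (by positivity)]
    linarith
  obtain ⟨K, hK⟩ := eventually_atTop.1 (e1.and (e2.and (e3.and e4)))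
  have fact3 : ∀ k, K ≤ k → 3 ≤ k := fun k hk => (hK k hk).1
  have factR : ∀ k, K ≤ k → 8*(X+1)/ε ≤ rr k := fun k hk => (hK k hk).2.1
  have factR8 : ∀ k, K ≤ k → 8*(X+1) ≤ rr k := by
    intro k hk
    have h1 := factR k hk
    have h2 : 8*(X+1) ≤ 8*(X+1)/ε := le_div_self (by linarith) hε hε1
    linarith
  have factRpos : ∀ k, K ≤ k → 0 < rr k := by
    intro k hk
    have := factR8 k hk; linarith
  have factD : ∀ k, K ≤ k → 0 ≤ ph (k+1) - ph k ∧ rr (k+1) * (ph (k+1) - ph k) ≤ ε/4 := by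
    intro k hk
    have h3 := fact3 k hk
    have hm := (hK k hk).2.2.1
    have hu1 : 1 ≤ Real.log (Real.log k) := le_trans (le_max_left _ _) hm
    obtain ⟨hd0, hd⟩ := ph_step h3 hu1
    refine ⟨hd0, le_trans hd ?_⟩
    have h8' : (0:ℝ) < 8/ε := by positivity
    have h8 : (8/ε) ≤ Real.sqrt (Real.log (Real.log k)) := by
      rw [show (8:ℝ)/ε = Real.sqrt ((8/ε)^2) from (Real.sqrt_sq (by positivity)).symm]
      exact Real.sqrt_le_sqrt (le_trans (le_max_right _ _) hm)
    calc 2 / Real.sqrt (Real.log (Real.log k)) ≤ 2 / (8/ε) :=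
        div_le_div_of_nonneg_left (by norm_num) h8' h8
      _ = ε/4 := by field_simp; ring
  have factD4 : ∀ k, K ≤ k → ph (k+1) - ph k ≤ 1/4 := by
    intro k hk
    obtain ⟨hd0, hd⟩ := factD k hk
    have h1 : (1:ℝ) ≤ rr (k+1) := by
      have h := factR8 (k+1) (by omega)
      linarith
    exact small_of_mul h1 hd0 (by linarith)
  have factG : ∀ k, K ≤ k → rr k ≤ rr (k+1) ∧ rr (k+1) - rr k ≤ (ε/(4*(X+1))) * rr k := by
    intro k hk
    obtain ⟨hmono, hgap⟩ := rr_gap (fact3 k hk)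
    refine ⟨hmono, le_trans hgap ?_⟩
    exact mul_le_mul_of_nonneg_right (hK k hk).2.2.2 (le_of_lt (factRpos k hk))
  -- the sequence B
  set B : ℕ → ℝ := fun k => rr k * Real.sin (ph k - θ) - cb with hB
  have hBdef : ∀ k, B k = rr k * Real.sin (ph k - θ) - cb := fun k => by rw [hB]
  -- choice of the winding number n
  have hπ : (0:ℝ) < 2*Real.pi := by linarith
  obtain ⟨n, hn⟩ := exists_nat_gt ((ph K - θ + Real.pi/4)/(2*Real.pi))
  have hTK : ph K < θ + 2*Real.pi*n - Real.pi/4 := by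
    rw [div_lt_iff₀ hπ] at hn; linarith
  -- k0 : first index entering the window
  have hex0 : ∃ k, K ≤ k ∧ θ + 2*Real.pi*n - Real.pi/4 ≤ ph k :=
    ((eventually_ge_atTop K).and (ph_tendsto.eventually_ge_atTop _)).exists
  set k0 := Nat.find hex0 with hk0d
  have hspec0 := Nat.find_spec hex0
  rw [← hk0d] at hspec0
  obtain ⟨hk0K, hk0T⟩ := hspec0
  have hk0gt : K < k0 := by
    rcases lt_or_eq_of_le hk0K with h | h
    · exact h
    · exfalso; rw [← h] at hk0T; linarith
  have hprev0 : ph (k0 - 1) < θ + 2*Real.pi*n - Real.pi/4 := by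
    have hlt : k0 - 1 < k0 := by omega
    have h := Nat.find_min hex0 (hk0d ▸ hlt)
    push_neg at h
    exact h (by omega)
  have hk0ub : ph k0 ≤ θ + 2*Real.pi*n - Real.pi/4 + 1/4 := by
    have hK1 : K ≤ k0 - 1 := by omega
    have hd := factD4 (k0-1) hK1
    rw [show k0 - 1 + 1 = k0 by omega] at hd
    linarith [hprev0]
  -- B k0 is very negative
  have hBk0 : B k0 < -ε := by
    have hsin : Real.sin (ph k0 - θ) = Real.sin (ph k0 - θ - 2*Real.pi*n) :=
      (sin_shift (ph k0 - θ) n).symm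
    have hs1 : -(Real.pi/4) ≤ ph k0 - θ - 2*Real.pi*n := by linarith
    have hs2 : ph k0 - θ - 2*Real.pi*n ≤ -(Real.pi/6) := by linarith
    have hmem1 : ph k0 - θ - 2*Real.pi*n ∈ Set.Icc (-(Real.pi/2)) (Real.pi/2) :=
      ⟨by linarith, by linarith⟩
    have hmem2 : -(Real.pi/6) ∈ Set.Icc (-(Real.pi/2)) (Real.pi/2) := ⟨by linarith, by linarith⟩
    have hmono := Real.strictMonoOn_sin.monotoneOn hmem1 hmem2 hs2
    rw [Real.sin_neg, Real.sin_pi_div_six] at hmono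
    have hr8 := factR8 k0 hk0K
    have hrp := factRpos k0 hk0K
    have hmul : rr k0 * Real.sin (ph k0 - θ) ≤ rr k0 * (-(1/2)) := by
      rw [hsin]; exact mul_le_mul_of_nonneg_left hmono hrp.le
    rw [hBdef k0]
    linarith [habs_cb.1]
  -- helper: once the angle passes the upper window edge, B is not very negative
  have hW : ∀ k, K ≤ k → θ + 2*Real.pi*n + Real.pi/6 < ph k →
      ph k ≤ θ + 2*Real.pi*n + Real.pi/6 + 1/4 → -ε < B k := by
    intro k hk h1 h2
    have hsin : Real.sin (ph k - θ) = Real.sin (ph k - θ - 2*Real.pi*n) :=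
      (sin_shift (ph k - θ) n).symm
    have hs1 : Real.pi/6 < ph k - θ - 2*Real.pi*n := by linarith
    have hs2 : ph k - θ - 2*Real.pi*n ≤ Real.pi/6 + 1/4 := by linarith
    have hmem1 : Real.pi/6 ∈ Set.Icc (-(Real.pi/2)) (Real.pi/2) := ⟨by linarith, by linarith⟩
    have hmem2 : ph k - θ - 2*Real.pi*n ∈ Set.Icc (-(Real.pi/2)) (Real.pi/2) :=
      ⟨by linarith, by linarith⟩
    have hmono := Real.strictMonoOn_sin.monotoneOn hmem1 hmem2 hs1.le
    rw [Real.sin_pi_div_six] at hmono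
    have hr8 := factR8 k hk
    have hrp := factRpos k hk
    have hmul : rr k * (1/2) ≤ rr k * Real.sin (ph k - θ) := by
      rw [hsin]; exact mul_le_mul_of_nonneg_left hmono hrp.le
    rw [hBdef k]
    linarith [habs_cb.2]
  -- existence of an index where B comes back above -ε
  have hex1 : ∃ k, k0 ≤ k ∧ -ε ≤ B k := by
    by_contra hcon
    push_neg at hcon
    have hbnd : ∀ m : ℕ, ph (k0 + m) ≤ θ + 2*Real.pi*n + Real.pi/6 + 1/4 := by
      intro m
      induction m with
      | zero =>
        simp only [Nat.add_zero]
        linarith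
      | succ m ih =>
        have hKm : K ≤ k0 + m := by omega
        have hstep := factD4 (k0+m) hKm
        rw [show k0 + (m+1) = k0 + m + 1 by omega]
        by_cases hc2 : ph (k0+m) ≤ θ + 2*Real.pi*n + Real.pi/6
        · linarith
        · exfalso
          push_neg at hc2
          have h1 := hW (k0+m) hKm hc2 ih
          have h2 := hcon (k0+m) (by omega)
          linarith
    obtain ⟨k, hk1, hk2⟩ := ((eventually_ge_atTop k0).and
      (ph_tendsto.eventually_gt_atTop (θ + 2*Real.pi*n + Real.pi/6 + 1/4))).exists
    have := hbnd (k - k0)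
    rw [show k0 + (k - k0) = k by omega] at this
    linarith
  set k1 := Nat.find hex1 with hk1d
  have hspec1 := Nat.find_spec hex1
  rw [← hk1d] at hspec1
  obtain ⟨hk1k0, hBk1lb⟩ := hspec1
  have hk1K : K ≤ k1 := le_trans hk0K hk1k0
  have hk1gt : k0 < k1 := by
    rcases lt_or_eq_of_le hk1k0 with h | h
    · exact h
    · exfalso; rw [← h] at hBk1lb; linarith
  have hBlt : ∀ k, k0 ≤ k → k < k1 → B k < -ε := by
    intro k h1 h2
    have h := Nat.find_min hex1 (hk1d ▸ h2)
    push_neg at h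
    exact h h1
  -- window invariant up to k1
  have hwin : ∀ m : ℕ, k0 + m < k1 → ph (k0 + m) ≤ θ + 2*Real.pi*n + Real.pi/6 := by
    intro m
    induction m with
    | zero =>
      intro _
      simp only [Nat.add_zero]
      linarith
    | succ m ih =>
      intro hlt
      have hm_lt : k0 + m < k1 := by omega
      have hW1 := ih hm_lt
      have hKm : K ≤ k0 + m := by omega
      have hstep := factD4 (k0+m) hKm
      rw [show k0 + (m+1) = k0 + m + 1 by omega]
      by_contra hc2
      push_neg at hc2
      have hub : ph (k0+m+1) ≤ θ + 2*Real.pi*n + Real.pi/6 + 1/4 := by linarith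
      have h1 := hW (k0+m+1) (by omega) hc2 hub
      have h2 := hBlt (k0+m+1) (by omega) (by omega)
      linarith
  have hjK : K ≤ k1 - 1 := by omega
  have hBj : B (k1-1) < -ε := hBlt (k1-1) (by omega) (by omega)
  have hwinj : ph (k1-1) ≤ θ + 2*Real.pi*n + Real.pi/6 := by
    have h := hwin ((k1-1) - k0) (by omega)
    rw [show k0 + ((k1-1) - k0) = k1 - 1 by omega] at h
    exact h
  have hidx : k1 - 1 + 1 = k1 := by omega
  obtain ⟨hd0, hdj⟩ := factD (k1-1) hjK
  rw [hidx] at hd0 hdj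
  have hd4 := factD4 (k1-1) hjK
  rw [hidx] at hd4
  have hub1 : ph k1 ≤ θ + 2*Real.pi*n + Real.pi/6 + 1/4 := by linarith
  have hlb1 : θ + 2*Real.pi*n - Real.pi/4 ≤ ph k1 := by
    have h := ph_mono (fact3 k0 hk0K) hk1k0
    linarith
  -- cosine lower bound at k1
  have hr1pos := factRpos k1 hk1K
  have hr18 := factR8 k1 hk1K
  have hcos : (1:ℝ)/2 ≤ Real.cos (ph k1 - θ) := by
    have hcosp : Real.cos (ph k1 - θ) = Real.cos (ph k1 - θ - 2*Real.pi*n) :=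
      (cos_shift (ph k1 - θ) n).symm
    rw [hcosp]
    have hs1 : -(Real.pi/4) ≤ ph k1 - θ - 2*Real.pi*n := by linarith
    have hs2 : ph k1 - θ - 2*Real.pi*n ≤ Real.pi/4 := by linarith
    exact cos_lb hs1 hs2
  -- upper bound for B k1
  have hrj8 := factR8 (k1-1) hjK
  have hrjpos := factRpos (k1-1) hjK
  obtain ⟨hmono1, hgap1⟩ := factG (k1-1) hjK
  rw [hidx] at hmono1 hgap1
  have hsin_close : Real.sin (ph k1 - θ) ≤ Real.sin (ph (k1-1) - θ) + (ph k1 - ph (k1-1)) := by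
    have h := abs_sin_sub (ph k1 - θ) (ph (k1-1) - θ)
    rw [show (ph k1 - θ) - (ph (k1-1) - θ) = ph k1 - ph (k1-1) by ring,
      abs_of_nonneg hd0] at h
    linarith [(abs_le.1 h).2]
  have hsin_j : rr (k1-1) * Real.sin (ph (k1-1) - θ) ≤ cb - ε := by
    have h := hBj
    rw [hBdef (k1-1)] at h
    linarith
  have hBk1ub : B k1 ≤ ε := by
    rw [hBdef k1]
    exact b_step_bound hε (by linarith) habs_cb.2 hsin_close hd0 hdj hsin_j hmono1 hgap1
      hr1pos.le
  have hBabs : |B k1| ≤ ε := abs_le.2 ⟨hBk1lb, hBk1ub⟩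
  refine ⟨k1, rr k1 * Real.cos (ph k1 - θ) - ca, by have := fact3 k1 hk1K; omega, ?_, ?_⟩
  · have hm := mul_le_mul_of_nonneg_left hcos hr1pos.le
    linarith [habs_ca.2]
  · rw [hBdef k1] at hBabs
    rw [hθ, hcbd, hcdef] at hBabs
    rw [hθ, hcad, hcdef]
    rw [dist_formula x v hv k1]
    exact hBabs

end SpiralAux

theorem stmt6 (Y : Set ℂ) (hY : Y = {w : ℂ | ∃ k : ℕ, 2 ≤ k ∧ w = spiralPoint k})
    (x v : ℂ) (hv : ‖v‖ = 1) :
    setDist {p : ℂ | ∃ t : ℝ, 0 ≤ t ∧ p = x + t • v} Y = 0 := by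
  unfold setDist
  set A := {p : ℂ | ∃ t : ℝ, 0 ≤ t ∧ p = x + t • v} with hA
  have hAx : x ∈ A := ⟨0, le_refl 0, by simp⟩
  have hy2 : spiralPoint 2 ∈ Y := by rw [hY]; exact ⟨2, le_refl 2, rfl⟩
  have hne : (Set.image2 dist A Y).Nonempty := ⟨_, Set.mem_image2_of_mem hAx hy2⟩
  have hbdd : BddBelow (Set.image2 dist A Y) := by
    refine ⟨0, fun d hd => ?_⟩
    obtain ⟨p, hp, q, hq, rfl⟩ := hd
    exact dist_nonneg
  apply le_antisymm
  · have h2 : ∀ ε : ℝ, 0 < ε → sInf (Set.image2 dist A Y) ≤ ε := by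
      intro ε hε
      obtain ⟨k, t, hk2, ht, hdist⟩ :=
        SpiralAux.approx x v hv (lt_min hε one_pos) (min_le_right ε 1)
      have hmem : dist (x + t • v) (spiralPoint k) ∈ Set.image2 dist A Y :=
        Set.mem_image2_of_mem ⟨t, ht, rfl⟩ (by rw [hY]; exact ⟨k, hk2, rfl⟩)
      exact csInf_le_of_le hbdd hmem (le_trans hdist (min_le_left ε 1))
    by_contra hc
    push_neg at hc
    have := h2 (sInf (Set.image2 dist A Y) / 2) (by linarith)
    linarith
  · refine le_csInf hne fun d hd => ?_
    obtain ⟨p, hp, q, hq, rfl⟩ := hd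
    exact dist_nonneg
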